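/- arXiv:2510.23298 — 7 statements merged into one kernel-verified Lean document; each statement's English description precedes it below -/
import Mathlib

section
/- For every prime p and integers n, ℓ with 0 ≤ ℓ < p, the Apéry numbers satisfy α_{np+ℓ} ≡ α_n · α_ℓ (mod p), where α_m = Σ_{k=0}^m C(m,k)² C(m+k,m)². -/
open Finset

/-- Lucas' theorem in `ZMod p` form for two-digit base-`p` expansions. -/
lemma lucasZ (p : ℕ) [Fact p.Prime] (a b c d : ℕ) (hb : b < p) (hd : d < p) :
    (((a * p + b).choose (c * p + d) : ℕ) : ZMod p)
      = ((a.choose c : ℕ) : ZMod p) * ((b.choose d : ℕ) : ZMod p) := by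
  have hp : 0 < p := (Fact.out : p.Prime).pos
  have h := Choose.choose_modEq_choose_mod_mul_choose_div_nat (p := p)
    (n := a * p + b) (k := c * p + d)
  have h1 : (a * p + b) % p = b := by
    rw [mul_comm, Nat.mul_add_mod, Nat.mod_eq_of_lt hb]
  have h2 : (a * p + b) / p = a := by
    rw [mul_comm, Nat.mul_add_div hp, Nat.div_eq_of_lt hb, add_zero]
  have h3 : (c * p + d) % p = d := by
    rw [mul_comm, Nat.mul_add_mod, Nat.mod_eq_of_lt hd]
  have h4 : (c * p + d) / p = c := by
    rw [mul_comm, Nat.mul_add_div hp, Nat.div_eq_of_lt hd, add_zero]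
  rw [h1, h2, h3, h4] at h
  have := (ZMod.natCast_eq_natCast_iff _ _ _).mpr h
  rw [this]
  push_cast
  ring

lemma sum_range_mul_eq {M : Type*} [AddCommMonoid M] (f : ℕ → M) (a b : ℕ) :
    ∑ k ∈ range (a * b), f k = ∑ j ∈ range a, ∑ i ∈ range b, f (j * b + i) := by
  induction a with
  | zero => simp
  | succ a ih =>
    rw [add_mul, one_mul, Finset.sum_range_add, ih, Finset.sum_range_succ]

/-- The Apéry numbers `α_m = ∑_{k=0}^m C(m,k)² C(m+k,m)²`. -/
def apery (m : ℕ) : ℕ := ∑ k ∈ Finset.range (m + 1), (m.choose k) ^ 2 * ((m + k).choose m) ^ 2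

theorem apery_lucas (p : ℕ) (hp : p.Prime) (n ℓ : ℕ) (hℓ : ℓ < p) :
    (apery (n * p + ℓ) : ZMod p) = (apery n : ZMod p) * (apery ℓ : ZMod p) := by
  haveI : Fact p.Prime := ⟨hp⟩
  set m := n * p + ℓ with hm
  -- terms as natural numbers
  have key : ∀ j ∈ range (n + 1), ∀ i ∈ range p,
      ((m.choose (j * p + i) ^ 2 * ((m + (j * p + i)).choose m) ^ 2 : ℕ) : ZMod p)
        = ((n.choose j ^ 2 * ((n + j).choose n) ^ 2 : ℕ) : ZMod p)
          * ((ℓ.choose i ^ 2 * ((ℓ + i).choose ℓ) ^ 2 : ℕ) : ZMod p) := by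
    intro j hj i hi
    rw [mem_range] at hi
    have h1 : ((m.choose (j * p + i) : ℕ) : ZMod p)
        = ((n.choose j : ℕ) : ZMod p) * ((ℓ.choose i : ℕ) : ZMod p) :=
      lucasZ p n ℓ j i hℓ hi
    by_cases hli : ℓ + i < p
    · have h2 : m + (j * p + i) = (n + j) * p + (ℓ + i) := by rw [hm]; ring
      have h3 : ((((n + j) * p + (ℓ + i)).choose m : ℕ) : ZMod p)
          = (((n + j).choose n : ℕ) : ZMod p) * (((ℓ + i).choose ℓ : ℕ) : ZMod p) :=
        lucasZ p (n + j) (ℓ + i) n ℓ hli hℓ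
      rw [h2]
      push_cast
      rw [h1, h3]
      ring
    · push_neg at hli
      -- both sides vanish
      have h2 : m + (j * p + i) = (n + j + 1) * p + (ℓ + i - p) := by
        have hx : (n + j + 1) * p = n * p + j * p + p := by ring
        omega
      have hz : ((ℓ + i - p).choose ℓ : ℕ) = 0 :=
        Nat.choose_eq_zero_of_lt (by omega)
      have h3 : ((((n + j + 1) * p + (ℓ + i - p)).choose m : ℕ) : ZMod p) = 0 := by
        rw [lucasZ p (n + j + 1) (ℓ + i - p) n ℓ (by omega) hℓ, hz]
        simp
      have h4 : (((ℓ + i).choose ℓ : ℕ) : ZMod p) = 0 := by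
        have := lucasZ p 1 (ℓ + i - p) 0 ℓ (by omega) hℓ
        rw [hz] at this
        simpa [show p + (ℓ + i - p) = ℓ + i by omega] using this
      rw [h2]
      push_cast at h3 h4 ⊢
      rw [h3, h4]
      ring
  -- rewrite the LHS as a double sum
  have step1 : (apery m : ZMod p)
      = ∑ k ∈ range ((n + 1) * p), ((m.choose k ^ 2 * ((m + k).choose m) ^ 2 : ℕ) : ZMod p) := by
    rw [apery]
    push_cast
    apply Finset.sum_subset
    · intro k hk
      rw [mem_range] at hk ⊢
      have hx : (n + 1) * p = n * p + p := by ring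
      omega
    · intro k _ hk
      rw [mem_range, not_lt] at hk
      rw [Nat.choose_eq_zero_of_lt (by omega)]
      push_cast
      ring
  rw [step1, sum_range_mul_eq]
  rw [Finset.sum_congr rfl (fun j hj => Finset.sum_congr rfl (fun i hi => key j hj i hi))]
  rw [← Finset.sum_mul_sum]
  have stepℓ : ∑ i ∈ range p, ((ℓ.choose i ^ 2 * ((ℓ + i).choose ℓ) ^ 2 : ℕ) : ZMod p)
      = (apery ℓ : ZMod p) := by
    rw [apery]
    push_cast
    symm
    apply Finset.sum_subset
    · intro k hk
      rw [mem_range] at hk ⊢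
      omega
    · intro k _ hk
      rw [mem_range, not_lt] at hk
      rw [Nat.choose_eq_zero_of_lt (by omega)]
      push_cast
      ring
  rw [stepℓ]
  simp only [apery]
  push_cast
  ring
end

section
/- For every prime p and integers n, ℓ with 0 ≤ ℓ < p, the Franel numbers satisfy F_{np+ℓ} ≡ F_n · F_ℓ (mod p), where F_m = Σ_{k=0}^m C(m,k)³. -/
/-- The Franel numbers `F_m = ∑_{k=0}^m C(m,k)³`. -/
def franel (m : ℕ) : ℕ := ∑ k ∈ Finset.range (m + 1), (m.choose k) ^ 3

theorem franel_lucas (p : ℕ) (hp : p.Prime) (n ℓ : ℕ) (hℓ : ℓ < p) :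
    (franel (n * p + ℓ) : ZMod p) = (franel n : ZMod p) * (franel ℓ : ZMod p) := by
  haveI : Fact p.Prime := ⟨hp⟩
  have hp0 : 0 < p := hp.pos
  have key : ∀ k : ℕ, ((n * p + ℓ).choose k : ZMod p)
      = (n.choose (k / p) : ZMod p) * (ℓ.choose (k % p) : ZMod p) := by
    intro k
    have h := (Choose.choose_modEq_choose_mod_mul_choose_div
      (n := n * p + ℓ) (k := k) (p := p))
    have hmod : (n * p + ℓ) % p = ℓ := by
      rw [mul_comm, Nat.mul_add_mod, Nat.mod_eq_of_lt hℓ]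
    have hdiv : (n * p + ℓ) / p = n := by
      rw [mul_comm, Nat.mul_add_div hp0, Nat.div_eq_of_lt hℓ, add_zero]
    rw [hmod, hdiv] at h
    have := (ZMod.intCast_eq_intCast_iff _ _ _).mpr h
    push_cast at this
    rw [this, mul_comm]
  simp only [franel, Nat.cast_sum, Nat.cast_pow, key, mul_pow]
  have hsub : Finset.range (n * p + ℓ + 1) ⊆ Finset.range ((n + 1) * p) := by
    intro k hk
    simp only [Finset.mem_range] at *
    nlinarith
  have hzero : ∀ k ∈ Finset.range ((n + 1) * p), k ∉ Finset.range (n * p + ℓ + 1) →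
      ((n.choose (k / p) : ZMod p)) ^ 3 * ((ℓ.choose (k % p) : ZMod p)) ^ 3 = 0 := by
    intro k hk hk'
    simp only [Finset.mem_range] at hk hk'
    have hdivk : k / p = n := by
      have h1 : n * p ≤ k := by omega
      have h2 : k < (n + 1) * p := hk
      rw [Nat.div_eq_of_lt_le (by rwa [mul_comm] at h1) (by rwa [mul_comm] at h2)]
    have hmodk : ℓ < k % p := by
      have h3 := Nat.mod_add_div k p
      rw [hdivk] at h3
      have h4 : p * n = n * p := mul_comm p n
      omega
    rw [Nat.choose_eq_zero_of_lt hmodk]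
    simp
  rw [Finset.sum_subset hsub hzero]
  have hext : (∑ r ∈ Finset.range (ℓ + 1), ((ℓ.choose r : ZMod p)) ^ 3)
      = ∑ r ∈ Finset.range p, ((ℓ.choose r : ZMod p)) ^ 3 := by
    refine Finset.sum_subset (Finset.range_subset_range.mpr hℓ) ?_
    intro r _ hr
    simp only [Finset.mem_range, not_lt] at hr
    rw [Nat.choose_eq_zero_of_lt (by omega)]
    simp
  rw [hext]
  -- reindex range ((n+1)*p) to product
  rw [Finset.sum_mul_sum]
  rw [← Finset.sum_product']
  refine Finset.sum_nbij' (fun k => (k / p, k % p)) (fun qr => qr.1 * p + qr.2) ?_ ?_ ?_ ?_ ?_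
  · intro k hk
    simp only [Finset.mem_range, Finset.mem_product] at *
    exact ⟨Nat.div_lt_of_lt_mul (by rwa [mul_comm] at hk), Nat.mod_lt _ hp0⟩
  · intro qr hqr
    simp only [Finset.mem_range, Finset.mem_product] at *
    calc qr.1 * p + qr.2 < qr.1 * p + p := by omega
      _ = (qr.1 + 1) * p := by ring
      _ ≤ (n + 1) * p := Nat.mul_le_mul_right _ (by omega)
  · intro k _
    exact Nat.div_add_mod' k p
  · intro qr hqr
    simp only [Finset.mem_range, Finset.mem_product] at hqr
    ext
    · show (qr.1 * p + qr.2) / p = qr.1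
      rw [mul_comm qr.1 p, Nat.mul_add_div hp0, Nat.div_eq_of_lt hqr.2, add_zero]
    · show (qr.1 * p + qr.2) % p = qr.2
      rw [mul_comm qr.1 p, Nat.mul_add_mod, Nat.mod_eq_of_lt hqr.2]
  · intro k _
    rfl
end

section
/- Let p > 13 be a prime. The truncated Franel polynomial H = Σ_{n=0}^{p-1} F_n xⁿ ∈ F_p[x] is not of the form (x - 1/8)^m (x+1)^{p-1-m} for any 0 ≤ m ≤ p-1. -/
open Polynomial in
theorem franel_truncation_not_product_of_linears (p : ℕ) (hp : p.Prime) (hp13 : 13 < p) :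
    let H : Polynomial (ZMod p) :=
      ∑ n ∈ Finset.range p,
        C (∑ k ∈ Finset.range (n + 1), ((n.choose k : ZMod p)) ^ 3) * X ^ n
    ∀ m : ℕ, m ≤ p - 1 → H ≠ (X - C (8 : ZMod p)⁻¹) ^ m * (X + 1) ^ (p - 1 - m) := by
  intro H m hm heq
  haveI : Fact p.Prime := ⟨hp⟩
  have hHdef : H = ∑ n ∈ Finset.range p,
      C (∑ k ∈ Finset.range (n + 1), ((n.choose k : ZMod p)) ^ 3) * X ^ n := rfl
  -- small naturals are nonzero in ZMod p
  have hnz : ∀ k : ℕ, 0 < k → k < p → ((k : ZMod p)) ≠ 0 := by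
    intro k hk0 hkp h
    rw [ZMod.natCast_eq_zero_iff] at h
    exact absurd (Nat.le_of_dvd hk0 h) (not_le.mpr hkp)
  -- coefficients of H
  have hHc : ∀ j, j < p → H.coeff j
      = ∑ k ∈ Finset.range (j + 1), ((j.choose k : ZMod p)) ^ 3 := by
    intro j hj
    rw [hHdef, finset_sum_coeff]
    simp only [coeff_C_mul, coeff_X_pow, mul_ite, mul_one, mul_zero]
    rw [Finset.sum_ite_eq (Finset.range p) j, if_pos (Finset.mem_range.mpr hj)]
  have hH0 : H.coeff 0 = 1 := by rw [hHc 0 (by omega)]; simp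
  have hH1 : H.coeff 1 = 2 := by
    rw [hHc 1 (by omega)]
    norm_num [Finset.sum_range_succ]
  have hH2 : H.coeff 2 = 10 := by
    rw [hHc 2 (by omega)]
    norm_num [Finset.sum_range_succ]
  -- coefficients of the RHS
  set u : ZMod p := -(8 : ZMod p)⁻¹ with hu_def
  set M : ZMod p := (m : ZMod p) with hM_def
  set T : ZMod p := ((p - 1 - m : ℕ) : ZMod p) with hT_def
  have hfc : ∀ k, ((X - C (8 : ZMod p)⁻¹) ^ m).coeff k
      = u ^ (m - k) * (m.choose k : ZMod p) := by
    intro k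
    rw [sub_eq_add_neg, ← C_neg, coeff_X_add_C_pow]
  have hgc : ∀ k, ((X + 1 : (ZMod p)[X]) ^ (p - 1 - m)).coeff k
      = ((p - 1 - m).choose k : ZMod p) := fun k => coeff_X_add_one_pow _ _ _
  have key : ∀ j, H.coeff j = ∑ i ∈ Finset.range (j + 1),
      u ^ (m - i) * (m.choose i : ZMod p) * (((p - 1 - m).choose (j - i) : ZMod p)) := by
    intro j
    rw [heq, coeff_mul, Finset.Nat.sum_antidiagonal_eq_sum_range_succ_mk]
    exact Finset.sum_congr rfl fun i _ => by rw [hfc, hgc]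
  -- equation from coeff 0
  have E0 : (1 : ZMod p) = u ^ m := by
    have := key 0
    rw [hH0] at this
    simpa using this
  -- equation from coeff 1
  have E1 : (2 : ZMod p) = u ^ m * T + u ^ (m - 1) * M := by
    have := key 1
    rw [hH1] at this
    rw [Finset.sum_range_succ, Finset.sum_range_succ, Finset.sum_range_zero] at this
    simpa [Nat.choose_one_right] using this
  have hT : T = -1 - M := by
    rw [hT_def, Nat.cast_sub hm, Nat.cast_sub hp.one_le]
    simp [ZMod.natCast_self, hM_def]
  have h3ne : (3 : ZMod p) ≠ 0 := by
    have := hnz 3 (by norm_num) (by omega)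
    simpa using this
  -- case m = 0
  rcases Nat.eq_zero_or_pos m with hm0 | hm1
  · subst hm0
    rw [hT] at E1
    simp [hM_def] at E1
    have : (3 : ZMod p) = 0 := by linear_combination E1
    exact h3ne this
  -- m ≥ 1
  have huinv : u⁻¹ = -8 := by rw [hu_def, inv_neg, inv_inv]
  have hum1 : u ^ (m - 1) = -8 := by
    rw [← huinv]
    refine eq_inv_of_mul_eq_one_left ?_
    rw [← pow_succ, Nat.sub_add_cancel hm1, ← E0]
  have h3 : (3 : ZMod p) * M = -1 := by
    rw [← E0, hum1, hT] at E1
    have h9 : (3 : ZMod p) * ((3 : ZMod p) * M + 1) = 0 := by linear_combination E1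
    rcases mul_eq_zero.mp h9 with h | h
    · exact absurd h h3ne
    · linear_combination h
  have hdvd : p ∣ 3 * m + 1 := by
    have hc : ((3 * m + 1 : ℕ) : ZMod p) = 0 := by
      push_cast
      linear_combination h3
    exact (ZMod.natCast_eq_zero_iff _ _).mp hc
  have hm2 : 2 ≤ m := by
    have := Nat.le_of_dvd (by omega) hdvd
    omega
  have hum2 : u ^ (m - 2) = 64 := by
    have h1 : u ^ 2 * u ^ (m - 2) = 1 := by
      rw [← pow_add, show 2 + (m - 2) = m from by omega, ← E0]
    have h2 : u ^ (m - 2) = (u ^ 2)⁻¹ := eq_inv_of_mul_eq_one_right h1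
    rw [h2, ← inv_pow, huinv]
    norm_num
  -- choose 2 cast lemma
  have hch2 : ∀ n : ℕ, ((n.choose 2 : ℕ) : ZMod p) * 2 = (n : ZMod p) * ((n : ZMod p) - 1) := by
    intro n
    cases n with
    | zero => simp
    | succ k =>
      have hnat : (k + 1).choose 2 * 2 = (k + 1) * k := by
        rw [Nat.choose_two_right]
        simp only [Nat.add_sub_cancel]
        exact Nat.div_mul_cancel (by simpa [mul_comm] using (Nat.even_mul_succ_self k).two_dvd)
      have h2 := congrArg (Nat.cast : ℕ → ZMod p) hnat
      push_cast at h2 ⊢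
      linear_combination h2
  -- equation from coeff 2
  have E2 : (10 : ZMod p) = ((p - 1 - m).choose 2 : ZMod p)
      + (-8) * M * T + 64 * ((m.choose 2 : ℕ) : ZMod p) := by
    have := key 2
    rw [hH2] at this
    rw [Finset.sum_range_succ, Finset.sum_range_succ, Finset.sum_range_succ,
      Finset.sum_range_zero] at this
    norm_num [Nat.choose_one_right] at this
    rw [← E0, hum1, hum2, ← hM_def, ← hT_def] at this
    linear_combination this
  have e2' : (20 : ZMod p) = T * (T - 1) + (-16) * M * T + 64 * (M * (M - 1)) := by
    linear_combination 2 * E2 + hch2 (p - 1 - m) + 64 * hch2 m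
  rw [hT] at e2'
  have final : ((18 : ℕ) : ZMod p) = 0 := by
    push_cast
    linear_combination (-3) * e2' + (-(9 * (9 * M - 8))) * h3
  have hd : p ∣ 18 := (ZMod.natCast_eq_zero_iff 18 p).mp final
  have hle : p ≤ 18 := Nat.le_of_dvd (by norm_num) hd
  interval_cases p <;> first | exact absurd hd (by decide) | exact absurd hp (by decide)
end

section
/- Let p > 13 be prime. The truncated Franel polynomial H = Σ_{n=0}^{p-1} F_n xⁿ ∈ F_p[x] has a root in the algebraic closure of F_p different from 0, -1, and 1/8. -/
open Polynomial

private lemma franel_mul_coeff_one {R : Type*} [CommSemiring R] (f g : R[X]) :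
    (f * g).coeff 1 = f.coeff 0 * g.coeff 1 + f.coeff 1 * g.coeff 0 := by
  rw [Polynomial.coeff_mul, Finset.Nat.sum_antidiagonal_eq_sum_range_succ_mk]
  simp [Finset.sum_range_succ]

private lemma franel_mul_coeff_two {R : Type*} [CommSemiring R] (f g : R[X]) :
    (f * g).coeff 2 =
      f.coeff 0 * g.coeff 2 + f.coeff 1 * g.coeff 1 + f.coeff 2 * g.coeff 0 := by
  rw [Polynomial.coeff_mul, Finset.Nat.sum_antidiagonal_eq_sum_range_succ_mk]
  simp [Finset.sum_range_succ]

private lemma franel_cast_pow_mul {K : Type*} [Field K] (n : ℕ) (f : K[X]) :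
    C (n : K) * f ^ (n - 1) * f = C (n : K) * f ^ n := by
  cases n with
  | zero => simp
  | succ m => rw [Nat.add_sub_cancel, pow_succ]; ring

open Polynomial in
theorem franel_truncation_has_other_root (p : ℕ) [Fact (Nat.Prime p)] (hp13 : 13 < p) :
    let H : Polynomial (ZMod p) :=
      ∑ n ∈ Finset.range p,
        C (∑ k ∈ Finset.range (n + 1), ((n.choose k : ZMod p)) ^ 3) * X ^ n
    ∃ r : AlgebraicClosure (ZMod p),
      Polynomial.aeval r H = 0 ∧ r ≠ 0 ∧ r ≠ -1 ∧ r ≠ (8 : AlgebraicClosure (ZMod p))⁻¹ := by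
  intro H
  classical
  by_contra hcon
  push_neg at hcon
  set K := AlgebraicClosure (ZMod p) with hK
  have hp : p.Prime := Fact.out
  -- nonvanishing of small naturals in K
  have hcast : ∀ n : ℕ, 0 < n → n < p → (n : K) ≠ 0 := by
    intro n hn hnp h
    rw [CharP.cast_eq_zero_iff K p] at h
    exact absurd (Nat.le_of_dvd hn h) (by omega)
  -- coefficients of H
  have hc : ∀ m : ℕ, m < p →
      H.coeff m = ∑ k ∈ Finset.range (m + 1), ((m.choose k : ZMod p)) ^ 3 := by
    intro m hm
    simp only [H, Polynomial.finset_sum_coeff, Polynomial.coeff_C_mul, Polynomial.coeff_X_pow,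
      mul_ite, mul_one, mul_zero]
    rw [Finset.sum_ite_eq (Finset.range p)]
    simp [Finset.mem_range.mpr hm]
  have hH0 : H.coeff 0 = 1 := by rw [hc 0 (by omega)]; simp
  have hH1 : H.coeff 1 = 2 := by
    rw [hc 1 (by omega)]; norm_num [Finset.sum_range_succ]
  have hH2 : H.coeff 2 = 10 := by
    rw [hc 2 (by omega)]; norm_num [Finset.sum_range_succ]
  have hH3 : H.coeff 3 = 56 := by
    rw [hc 3 (by omega)]
    have e1 : Nat.choose 3 1 = 3 := by decide
    have e2 : Nat.choose 3 2 = 3 := by decide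
    norm_num [Finset.sum_range_succ, e1, e2]
  set Q : K[X] := H.map (algebraMap (ZMod p) K) with hQdef
  have hQ0 : Q.coeff 0 = 1 := by rw [Polynomial.coeff_map, hH0, map_one]
  have hQ1 : Q.coeff 1 = 2 := by rw [Polynomial.coeff_map, hH1, map_ofNat]
  have hQ2 : Q.coeff 2 = 10 := by rw [Polynomial.coeff_map, hH2, map_ofNat]
  have hQ3 : Q.coeff 3 = 56 := by rw [Polynomial.coeff_map, hH3, map_ofNat]
  have hQne : Q ≠ 0 := by
    intro h
    rw [h] at hQ0
    simpa using hQ0.symm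
  set u : K := (8 : K)⁻¹ with hu
  have h8 : (8 : K) ≠ 0 := hcast 8 (by omega) (by omega)
  have h8u : (8 : K) * u = 1 := mul_inv_cancel₀ h8
  -- all roots are -1 or u
  have hroots : ∀ r ∈ Q.roots, r = -1 ∨ r = u := by
    intro r hr
    have hev : Q.eval r = 0 := (Polynomial.mem_roots hQne).1 hr
    have haev : (Polynomial.aeval r) H = 0 := by
      rwa [Polynomial.aeval_def, ← Polynomial.eval_map]
    have hr0 : r ≠ 0 := by
      intro h0
      rw [h0, ← Polynomial.coeff_zero_eq_eval_zero, hQ0] at hev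
      simpa using hev
    by_cases h1 : r = -1
    · exact Or.inl h1
    · exact Or.inr (hcon r haev hr0 h1)
  have hne1u : (-1 : K) ≠ u := by
    intro h
    have : (9 : K) = 0 := by
      have := congrArg (fun x => (8 : K) * x) h
      simp only [h8u] at this
      linear_combination -this
    exact hcast 9 (by omega) (by omega) (by exact_mod_cast this)
  -- factor Q
  have hsplit : Q.Splits := IsAlgClosed.splits Q
  set b : ℕ := Q.roots.count (-1) with hb
  set c : ℕ := Q.roots.count u with hcdef
  have hM : Q.roots = Multiset.replicate b (-1) + Multiset.replicate c u := by
    refine Multiset.ext.mpr fun x => ?_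
    rw [Multiset.count_add, Multiset.count_replicate, Multiset.count_replicate]
    rcases eq_or_ne x (-1) with h1 | h1
    · subst h1
      rw [if_pos rfl, if_neg (fun h : u = -1 => hne1u h.symm), add_zero]
    · rcases eq_or_ne x u with h2 | h2
      · subst h2
        rw [if_neg (fun h : (-1 : K) = u => h1 h.symm), if_pos rfl, zero_add]
      · rw [if_neg (fun h => h1 h.symm), if_neg (fun h => h2 h.symm), add_zero]
        have hx : x ∉ Q.roots := fun hx => (hroots x hx).elim h1 h2
        simp [Multiset.count_eq_zero_of_notMem hx]
  have hfact : Q = C Q.leadingCoeff * ((X - C (-1 : K)) ^ b * (X - C u) ^ c) := by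
    conv_lhs => rw [hsplit.eq_prod_roots]
    rw [hM]
    simp [Multiset.prod_replicate]
  set A : K[X] := X - C (-1 : K) with hA
  set B : K[X] := X - C u with hB
  -- the key differential identity
  have key : derivative Q * (A * B) =
      Q * (C (b : K) * B + C (c : K) * A) := by
    have h1 : C ((b : K)) * A ^ (b - 1) * A = C ((b : K)) * A ^ b :=
      franel_cast_pow_mul b A
    have h2 : C ((c : K)) * B ^ (c - 1) * B = C ((c : K)) * B ^ c :=
      franel_cast_pow_mul c B
    have hdA : derivative A = 1 := by rw [hA]; exact derivative_X_sub_C _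
    have hdB : derivative B = 1 := by rw [hB]; exact derivative_X_sub_C _
    conv_lhs => rw [hfact]
    conv_rhs => rw [hfact]
    rw [derivative_C_mul, derivative_mul, derivative_pow, derivative_pow, hdA, hdB]
    linear_combination (C Q.leadingCoeff * B ^ c * B) * h1 +
      (C Q.leadingCoeff * A ^ b * A) * h2
  -- coefficients of the factors
  have hA0 : A.coeff 0 = 1 := by
    simp [hA, Polynomial.coeff_sub, Polynomial.coeff_X, Polynomial.coeff_C, Polynomial.coeff_one]
  have hA1 : A.coeff 1 = 1 := by
    simp [hA, Polynomial.coeff_sub, Polynomial.coeff_X, Polynomial.coeff_C, Polynomial.coeff_one]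
  have hA2 : A.coeff 2 = 0 := by
    simp [hA, Polynomial.coeff_sub, Polynomial.coeff_X, Polynomial.coeff_C, Polynomial.coeff_one]
  have hB0 : B.coeff 0 = -u := by
    simp [hB, Polynomial.coeff_sub, Polynomial.coeff_X, Polynomial.coeff_C, Polynomial.coeff_one]
  have hB1 : B.coeff 1 = 1 := by
    simp [hB, Polynomial.coeff_sub, Polynomial.coeff_X, Polynomial.coeff_C, Polynomial.coeff_one]
  have hB2 : B.coeff 2 = 0 := by
    simp [hB, Polynomial.coeff_sub, Polynomial.coeff_X, Polynomial.coeff_C, Polynomial.coeff_one]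
  have hAB0 : (A * B).coeff 0 = -u := by
    rw [Polynomial.mul_coeff_zero, hA0, hB0]; ring
  have hAB1 : (A * B).coeff 1 = 1 - u := by
    rw [franel_mul_coeff_one, hA0, hA1, hB0, hB1]; ring
  have hAB2 : (A * B).coeff 2 = 1 := by
    rw [franel_mul_coeff_two, hA0, hA1, hA2, hB0, hB1, hB2]; ring
  set G : K[X] := C (b : K) * B + C (c : K) * A with hG
  have hG0 : G.coeff 0 = (b : K) * (-u) + (c : K) := by
    rw [hG, Polynomial.coeff_add, Polynomial.coeff_C_mul, Polynomial.coeff_C_mul, hA0, hB0]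
    ring
  have hG1 : G.coeff 1 = (b : K) + (c : K) := by
    rw [hG, Polynomial.coeff_add, Polynomial.coeff_C_mul, Polynomial.coeff_C_mul, hA1, hB1]
    ring
  have hG2 : G.coeff 2 = 0 := by
    rw [hG, Polynomial.coeff_add, Polynomial.coeff_C_mul, Polynomial.coeff_C_mul, hA2, hB2]
    ring
  -- derivative coefficients
  have hD0 : (derivative Q).coeff 0 = 2 := by
    rw [Polynomial.coeff_derivative, hQ1]; norm_num
  have hD1 : (derivative Q).coeff 1 = 20 := by
    rw [Polynomial.coeff_derivative, hQ2]; norm_num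
  have hD2 : (derivative Q).coeff 2 = 168 := by
    rw [Polynomial.coeff_derivative, hQ3]; norm_num
  -- extract three scalar equations
  have E0 : (derivative Q * (A * B)).coeff 0 = (Q * G).coeff 0 := by rw [key]
  have E1 : (derivative Q * (A * B)).coeff 1 = (Q * G).coeff 1 := by rw [key]
  have E2 : (derivative Q * (A * B)).coeff 2 = (Q * G).coeff 2 := by rw [key]
  rw [Polynomial.mul_coeff_zero (derivative Q), Polynomial.mul_coeff_zero Q, hD0, hAB0, hQ0, hG0] at E0
  rw [franel_mul_coeff_one (derivative Q), franel_mul_coeff_one Q, hD0, hD1, hAB0, hAB1, hQ0, hQ1, hG0, hG1] at E1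
  rw [franel_mul_coeff_two (derivative Q), franel_mul_coeff_two Q, hD0, hD1, hD2, hAB0, hAB1, hAB2,
    hQ0, hQ1, hQ2, hG0, hG1, hG2] at E2
  -- derive the contradiction 12 = 0
  have h12 : (12 : K) = 0 := by
    linear_combination (-48 : K) * E0 + (-16 : K) * E1 + (8 : K) * E2 +
      (132 : K) * (by linear_combination h8u : (8 : K) * u - 1 = 0)
  exact hcast 12 (by omega) (by omega) (by exact_mod_cast h12)
end

section
/- The Franel generating series h = Σ_{n≥0} F_n xⁿ satisfies the differential equation x(x+1)(8x-1)h'' + (24x² + 14x - 1)h' + (8x+2)h = 0, as formal power series over ℚ. -/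
/-- Ratio relation for binomial coefficients, valid for all `n k : ℕ` over `ℚ`. -/
lemma franel_choose_ratio (n k : ℕ) :
    ((k : ℚ) + 1) * (n.choose (k + 1) : ℚ) = ((n : ℚ) - k) * (n.choose k : ℚ) := by
  rcases le_or_gt n k with h | h
  · rcases eq_or_lt_of_le h with rfl | h'
    · simp [Nat.choose_succ_self]
    · simp [Nat.choose_eq_zero_of_lt h', Nat.choose_eq_zero_of_lt (Nat.lt_succ_of_lt h')]
  · have h2 : ((n.choose (k + 1) * (k + 1) : ℕ) : ℚ) = ((n.choose k * (n - k) : ℕ) : ℚ) := by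
      exact_mod_cast congrArg (Nat.cast : ℕ → ℚ) (Nat.choose_succ_right_eq n k)
    push_cast [Nat.cast_sub h.le] at h2
    linarith

/-- The Zeilberger certificate for the Franel recurrence. -/
noncomputable def franelG (n k : ℕ) : ℚ :=
  -((k : ℚ) + 2) ^ 2 * (n.choose k : ℚ) ^ 3
    - (8 * (k : ℚ) ^ 2 + 27 * k + 22) * (n.choose k : ℚ) ^ 2 * (n.choose (k + 1) : ℚ)
    - (28 * (k : ℚ) ^ 2 + 77 * k + 52) * (n.choose k : ℚ) * (n.choose (k + 1) : ℚ) ^ 2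
    - (14 * (n : ℚ) ^ 2 + 15 * (n : ℚ) * k + 48 * n + 21 * (k : ℚ) ^ 2 + 69 * k + 68)
        * (n.choose (k + 1) : ℚ) ^ 3

lemma franel_key (n k : ℕ) :
    ((n : ℚ) + 2) ^ 2 * (((n + 2).choose (k + 2) : ℚ)) ^ 3
      - (7 * (n : ℚ) ^ 2 + 21 * n + 16) * (((n + 1).choose (k + 2) : ℚ)) ^ 3
      - 8 * ((n : ℚ) + 1) ^ 2 * ((n.choose (k + 2) : ℚ)) ^ 3
    = franelG n (k + 1) - franelG n k := by
  have r1 : ((k : ℚ) + 1) * (n.choose (k + 1) : ℚ) = ((n : ℚ) - k) * (n.choose k : ℚ) :=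
    franel_choose_ratio n k
  have r2 : ((k : ℚ) + 2) * (n.choose (k + 2) : ℚ) = ((n : ℚ) - k - 1) * (n.choose (k + 1) : ℚ) := by
    have := franel_choose_ratio n (k + 1)
    push_cast at this ⊢
    linarith
  have p1 : (((n + 1).choose (k + 2) : ℚ))
      = (n.choose (k + 1) : ℚ) + (n.choose (k + 2) : ℚ) := by
    exact_mod_cast congrArg (Nat.cast : ℕ → ℚ) (Nat.choose_succ_succ' n (k + 1))
  have p2 : (((n + 2).choose (k + 2) : ℚ))
      = (n.choose k : ℚ) + 2 * (n.choose (k + 1) : ℚ) + (n.choose (k + 2) : ℚ) := by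
    have e1 : (n + 2).choose (k + 2) = (n + 1).choose (k + 1) + (n + 1).choose (k + 2) :=
      Nat.choose_succ_succ' (n + 1) (k + 1)
    have e2 : (n + 1).choose (k + 1) = n.choose k + n.choose (k + 1) :=
      Nat.choose_succ_succ' n k
    have e3 : (n + 1).choose (k + 2) = n.choose (k + 1) + n.choose (k + 2) :=
      Nat.choose_succ_succ' n (k + 1)
    rw [e1, e2, e3]; push_cast; ring
  have hk1 : ((k : ℚ) + 1) ≠ 0 := by positivity
  have hk2 : ((k : ℚ) + 2) ≠ 0 := by positivity
  have hb : (n.choose (k + 1) : ℚ) = ((n : ℚ) - k) * (n.choose k : ℚ) / ((k : ℚ) + 1) := by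
    field_simp
    linarith
  have hc : (n.choose (k + 2) : ℚ)
      = ((n : ℚ) - k - 1) * (n.choose (k + 1) : ℚ) / ((k : ℚ) + 2) := by
    field_simp
    linarith
  rw [p1, p2, franelG, franelG, hc, hb]
  field_simp
  push_cast
  ring

lemma franel_rec (n : ℕ) :
    ((n : ℚ) + 2) ^ 2 * ∑ k ∈ Finset.range (n + 3), (((n + 2).choose k : ℚ)) ^ 3
      = (7 * (n : ℚ) ^ 2 + 21 * n + 16) * ∑ k ∈ Finset.range (n + 2), (((n + 1).choose k : ℚ)) ^ 3
        + 8 * ((n : ℚ) + 1) ^ 2 * ∑ k ∈ Finset.range (n + 1), ((n.choose k : ℚ)) ^ 3 := by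
  set T : ℕ → ℚ := fun k =>
    ((n : ℚ) + 2) ^ 2 * (((n + 2).choose k : ℚ)) ^ 3
      - (7 * (n : ℚ) ^ 2 + 21 * n + 16) * (((n + 1).choose k : ℚ)) ^ 3
      - 8 * ((n : ℚ) + 1) ^ 2 * ((n.choose k : ℚ)) ^ 3 with hT
  have e1 : ∑ k ∈ Finset.range (n + 3), (((n + 1).choose k : ℚ)) ^ 3
      = ∑ k ∈ Finset.range (n + 2), (((n + 1).choose k : ℚ)) ^ 3 := by
    rw [Finset.sum_range_succ, Nat.choose_succ_self, Nat.cast_zero]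
    ring
  have e0 : ∑ k ∈ Finset.range (n + 3), ((n.choose k : ℚ)) ^ 3
      = ∑ k ∈ Finset.range (n + 1), ((n.choose k : ℚ)) ^ 3 := by
    rw [Finset.sum_range_succ, Finset.sum_range_succ,
      Nat.choose_eq_zero_of_lt (by omega), Nat.choose_eq_zero_of_lt (by omega), Nat.cast_zero]
    ring
  have main : ∑ k ∈ Finset.range (n + 3), T k = 0 := by
    rw [Finset.sum_range_succ', Finset.sum_range_succ']
    have tel : ∑ k ∈ Finset.range (n + 1), T (k + 1 + 1)
        = franelG n (n + 1) - franelG n 0 := by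
      rw [← Finset.sum_range_sub (franelG n)]
      refine Finset.sum_congr rfl fun k _ => ?_
      simpa [hT] using franel_key n k
    rw [tel]
    have g1 : franelG n (n + 1) = 0 := by
      rw [franelG, Nat.choose_eq_zero_of_lt (by omega), Nat.choose_eq_zero_of_lt (by omega)]
      push_cast; ring
    have g0 : franelG n 0 = -4 - 22 * (n : ℚ) - 52 * (n : ℚ) ^ 2
        - (14 * (n : ℚ) ^ 2 + 48 * n + 68) * (n : ℚ) ^ 3 := by
      rw [franelG, Nat.choose_zero_right, Nat.choose_one_right]
      push_cast; ring
    rw [g1, g0, hT]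
    simp only [show (0:ℕ)+1 = 1 from rfl, show (0:ℕ)+1+1 = 2 from rfl,
      Nat.choose_zero_right, Nat.choose_one_right]
    push_cast
    ring
  have expand : ∑ k ∈ Finset.range (n + 3), T k
      = ((n : ℚ) + 2) ^ 2 * ∑ k ∈ Finset.range (n + 3), (((n + 2).choose k : ℚ)) ^ 3
        - (7 * (n : ℚ) ^ 2 + 21 * n + 16)
            * ∑ k ∈ Finset.range (n + 3), (((n + 1).choose k : ℚ)) ^ 3
        - 8 * ((n : ℚ) + 1) ^ 2 * ∑ k ∈ Finset.range (n + 3), ((n.choose k : ℚ)) ^ 3 := by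
    rw [Finset.mul_sum, Finset.mul_sum, Finset.mul_sum, ← Finset.sum_sub_distrib,
      ← Finset.sum_sub_distrib]
  rw [expand, e1, e0] at main
  linarith

open PowerSeries in
theorem franel_series_ode :
    let h : PowerSeries ℚ :=
      PowerSeries.mk fun n => ∑ k ∈ Finset.range (n + 1), ((n.choose k : ℚ)) ^ 3
    X * (X + 1) * (8 * X - 1) * (derivative ℚ (derivative ℚ h))
        + (24 * X ^ 2 + 14 * X - 1) * derivative ℚ h
        + (8 * X + 2) * h = 0 := by
  intro h
  set D1 : ℚ⟦X⟧ := derivative ℚ h with hD1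
  set D2 : ℚ⟦X⟧ := derivative ℚ D1 with hD2
  have expand : X * (X + 1) * (8 * X - 1) * D2 + (24 * X ^ 2 + 14 * X - 1) * D1
        + (8 * X + 2) * h
      = C 8 * D2 * X ^ 3 + C 7 * D2 * X ^ 2 - D2 * X ^ 1
        + C 24 * D1 * X ^ 2 + C 14 * D1 * X ^ 1 - D1
        + C 8 * h * X ^ 1 + C 2 * h := by
    simp only [map_ofNat]
    ring
  rw [expand]
  ext n
  simp only [map_add, map_sub, PowerSeries.coeff_mul_X_pow', PowerSeries.coeff_C_mul,
    hD2, hD1, PowerSeries.coeff_derivative, h, PowerSeries.coeff_mk, map_zero]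
  rcases n with _ | _ | _ | m
  · norm_num [Finset.sum_range_succ]
  · norm_num [Finset.sum_range_succ]
  · norm_num [Finset.sum_range_succ]
  · have hr := franel_rec (m + 2)
    norm_num
    rw [show m + 2 + 3 = m + 1 + 1 + 1 + 1 + 1 from rfl,
      show m + 2 + 2 = m + 1 + 1 + 1 + 1 from rfl,
      show m + 2 + 1 = m + 1 + 1 + 1 from rfl,
      show (m + 2 : ℕ) = m + 1 + 1 from rfl] at hr
    push_cast at hr ⊢
    linear_combination -hr
end

section
/- For a prime p ≡ 2 (mod 3) with p > 3, one has Σ_{k=0}^{p-1} C((2p-1)/3, k) · C((p-2)/3, k) ≡ -1 (mod p). -/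
lemma choose_p_sub_one (p : ℕ) (hp : p.Prime) : ∀ k, k ≤ p - 1 →
    (((p - 1).choose k : ZMod p) = (-1) ^ k) := by
  intro k
  induction k with
  | zero => simp
  | succ n ih =>
    intro hn
    have hn' : n ≤ p - 1 := by omega
    have hp1 : 1 ≤ p := hp.one_lt.le
    have hsucc : (p - 1).choose n + (p - 1).choose (n + 1) = p.choose (n + 1) := by
      conv_rhs => rw [show p = (p-1)+1 by omega]
      rw [Nat.choose_succ_succ]
    have hdvd : (p : ℕ) ∣ p.choose (n + 1) := hp.dvd_choose_self (by omega) (by omega)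
    have hcast : ((p.choose (n + 1) : ℕ) : ZMod p) = 0 := by
      exact_mod_cast (ZMod.natCast_eq_zero_iff _ _).mpr hdvd
    have h2 : ((p - 1).choose n : ZMod p) + ((p - 1).choose (n + 1) : ZMod p) = 0 := by
      rw [← Nat.cast_add, hsucc, hcast]
    rw [ih hn'] at h2
    have : ((p - 1).choose (n + 1) : ZMod p) = -(-1)^n := by linear_combination h2
    rw [this, pow_succ]
    ring

theorem chu_vandermonde_mod_p_two (p : ℕ) (hp : p.Prime) (h3 : p % 3 = 2) (hp3 : 3 < p) :
    (∑ k ∈ Finset.range p,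
        (((2 * p - 1) / 3).choose k : ZMod p) * (((p - 2) / 3).choose k : ZMod p)) = -1 := by
  set a := (2 * p - 1) / 3 with ha
  set b := (p - 2) / 3 with hb
  have hab : a + b = p - 1 := by omega
  have hbp : b + 1 ≤ p := by omega
  -- truncate the sum
  have hsum : (∑ k ∈ Finset.range p, ((a.choose k : ZMod p) * (b.choose k : ZMod p)))
      = ∑ k ∈ Finset.range (b + 1), ((a.choose k : ZMod p) * (b.choose k : ZMod p)) := by
    rw [← Finset.sum_range_add_sum_Ico _ hbp]
    have : ∑ k ∈ Finset.Ico (b+1) p, ((a.choose k : ZMod p) * (b.choose k : ZMod p)) = 0 := by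
      apply Finset.sum_eq_zero
      intro k hk
      simp only [Finset.mem_Ico] at hk
      rw [Nat.choose_eq_zero_of_lt (by omega : b < k)]
      simp
    rw [this, add_zero]
  rw [hsum]
  -- Vandermonde
  have hvand : (p - 1).choose b = ∑ k ∈ Finset.range (b + 1), a.choose k * b.choose k := by
    rw [← hab, Nat.add_choose_eq, Finset.Nat.sum_antidiagonal_eq_sum_range_succ_mk]
    apply Finset.sum_congr rfl
    intro k hk
    simp only [Finset.mem_range] at hk
    rw [Nat.choose_symm (by omega : k ≤ b)]
  have : (∑ k ∈ Finset.range (b + 1), ((a.choose k : ZMod p) * (b.choose k : ZMod p)))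
      = (((p - 1).choose b : ℕ) : ZMod p) := by
    rw [hvand]
    push_cast
    rfl
  rw [this, choose_p_sub_one p hp b (by omega)]
  have hodd : Odd b := by
    have h2 : p % 2 = 1 := Nat.odd_iff.mp (hp.odd_of_ne_two (by omega))
    refine Nat.odd_iff.mpr ?_
    omega
  exact hodd.neg_one_pow
end

section
/- For every prime p and integers n, ℓ with 0 ≤ ℓ < p, the central Delannoy-style sums a_n(4,0) = Σ_{k=0}^n C(n,k)⁴ satisfy the Lucas congruence a_{np+ℓ}(4,0) ≡ a_n(4,0) · a_ℓ(4,0) (mod p). -/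
/-- The generalized Apéry numbers `a_m(4,0) = ∑_{k=0}^m C(m,k)⁴`. -/
def aFourZero (m : ℕ) : ℕ := ∑ k ∈ Finset.range (m + 1), (m.choose k) ^ 4

lemma aFourZero_eq_sum (m N : ℕ) (h : m < N) :
    aFourZero m = ∑ k ∈ Finset.range N, (m.choose k) ^ 4 := by
  rw [aFourZero]
  apply Finset.sum_subset (by simpa using h)
  intro x _ hx
  simp only [Finset.mem_range, not_lt] at hx
  rw [Nat.choose_eq_zero_of_lt (by omega)]
  simp

theorem aFourZero_lucas (p : ℕ) (hp : p.Prime) (n ℓ : ℕ) (hℓ : ℓ < p) :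
    (aFourZero (n * p + ℓ) : ZMod p) = (aFourZero n : ZMod p) * (aFourZero ℓ : ZMod p) := by
  haveI : Fact p.Prime := ⟨hp⟩
  have hp0 : 0 < p := hp.pos
  have key : ∀ q r : ℕ, r < p →
      (((n * p + ℓ).choose (q * p + r) : ZMod p)) = (n.choose q) * (ℓ.choose r) := by
    intro q r hr
    have h := Choose.choose_modEq_choose_mod_mul_choose_div
      (n := n * p + ℓ) (k := q * p + r) (p := p)
    have hmod1 : (n * p + ℓ) % p = ℓ := by
      rw [add_comm, Nat.add_mul_mod_self_right, Nat.mod_eq_of_lt hℓ]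
    have hdiv1 : (n * p + ℓ) / p = n := by
      rw [add_comm, Nat.add_mul_div_right _ _ hp0, Nat.div_eq_of_lt hℓ, zero_add]
    have hmod2 : (q * p + r) % p = r := by
      rw [add_comm, Nat.add_mul_mod_self_right, Nat.mod_eq_of_lt hr]
    have hdiv2 : (q * p + r) / p = q := by
      rw [add_comm, Nat.add_mul_div_right _ _ hp0, Nat.div_eq_of_lt hr, zero_add]
    rw [hmod1, hdiv1, hmod2, hdiv2] at h
    have h2 := (ZMod.intCast_eq_intCast_iff _ _ _).2 h
    push_cast at h2
    rw [h2, mul_comm]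
  -- rewrite aFourZero (n*p+ℓ) as sum over range ((n+1)*p)
  have h1 : aFourZero (n * p + ℓ) = ∑ k ∈ Finset.range ((n+1) * p), ((n*p+ℓ).choose k) ^ 4 :=
    aFourZero_eq_sum _ _ (by nlinarith)
  have h2 : aFourZero ℓ = ∑ r ∈ Finset.range p, (ℓ.choose r) ^ 4 :=
    aFourZero_eq_sum _ _ hℓ
  rw [h1, h2, aFourZero]
  push_cast
  rw [Finset.sum_mul_sum, ← Finset.sum_product']
  apply Finset.sum_nbij' (fun k => (k / p, k % p)) (fun qr => qr.1 * p + qr.2)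
  · intro k hk
    simp only [Finset.mem_range] at hk
    simp only [Finset.mem_product, Finset.mem_range]
    constructor
    · have := Nat.div_lt_iff_lt_mul hp0 (x := k) (y := n+1)
      omega
    · exact Nat.mod_lt _ hp0
  · intro qr hqr
    simp only [Finset.mem_product, Finset.mem_range] at hqr
    simp only [Finset.mem_range]
    nlinarith [hqr.1, hqr.2]
  · intro k _; exact (Nat.div_add_mod' k p)
  · intro qr hqr
    simp only [Finset.mem_product, Finset.mem_range] at hqr
    have h2 : qr.2 < p := hqr.2
    have hdiv : (qr.1 * p + qr.2) / p = qr.1 := by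
      rw [add_comm, Nat.add_mul_div_right _ _ hp0, Nat.div_eq_of_lt h2, zero_add]
    have hmod : (qr.1 * p + qr.2) % p = qr.2 := by
      rw [add_comm, Nat.add_mul_mod_self_right, Nat.mod_eq_of_lt h2]
    exact Prod.ext hdiv hmod
  · intro k hk
    conv_lhs => rw [← Nat.div_add_mod' k p]
    rw [key _ _ (Nat.mod_lt _ hp0)]
    ring
end
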